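/- The Gaussian density determines the sphere dimension of a shrinking cylinder: for all integers $k, m \ge 1$, if $d_k \le d_m$ then $k \ge m$; in particular, if $d_k = d_m$ then $k = m$, where $d_k = (k/(2e))^{k/2} \cdot 2\sqrt{\pi}/\Gamma((k+1)/2)$. -/

import Mathlib

open Filter Topology Set

lemma pade {x : ℝ} (hx : 0 ≤ x) : Real.log (1 + x) ≤ x * (x + 6) / (2 * (2 * x + 3)) := by
  set f : ℝ → ℝ := fun t => t * (t + 6) / (2 * (2 * t + 3)) - Real.log (1 + t) with hf
  have hder : ∀ t : ℝ, 0 < t → HasDerivAt f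
      ((4*t^2+12*t+36)/(4*t+6)^2 - 1/(1+t)) t := by
    intro t ht
    have h1 : (2 * (2 * t + 3)) ≠ 0 := by nlinarith
    have h2 : (1 + t) ≠ 0 := by nlinarith
    have hg : HasDerivAt (fun t : ℝ => t * (t + 6) / (2 * (2 * t + 3)))
        ((4*t^2+12*t+36)/(4*t+6)^2) t := by
      have hnum : HasDerivAt (fun t : ℝ => t * (t + 6)) (2*t+6) t := by
        have := (hasDerivAt_id t).mul ((hasDerivAt_id t).add_const 6)
        simp only [id] at this; exact this.congr_deriv (by ring)
      have hden : HasDerivAt (fun t : ℝ => 2 * (2 * t + 3)) 4 t := by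
        have := (((hasDerivAt_id t).const_mul 2).add_const 3).const_mul 2
        exact this.congr_deriv (by norm_num)
      have := hnum.div hden h1
      refine this.congr_deriv ?_
      rw [div_eq_div_iff (by positivity) (by positivity)]
      ring
    have hl : HasDerivAt (fun t : ℝ => Real.log (1 + t)) (1/(1+t)) t := by
      have := ((hasDerivAt_id t).const_add 1).log h2
      exact this
    exact hg.sub hl
  have hmono : MonotoneOn f (Ici 0) := by
    apply monotoneOn_of_deriv_nonneg (convex_Ici 0)
    · apply ContinuousOn.sub
      · apply ContinuousOn.div (by fun_prop)
        · fun_prop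
        · intro t ht; simp only [mem_Ici] at ht; nlinarith
      · apply ContinuousOn.log (by fun_prop)
        intro t ht; simp only [mem_Ici] at ht; nlinarith
    · rw [interior_Ici]
      intro t ht
      exact ((hder t (mem_Ioi.mp ht)).differentiableAt).differentiableWithinAt
    · rw [interior_Ici]
      intro t ht
      rw [(hder t (mem_Ioi.mp ht)).deriv]
      simp only [mem_Ioi] at ht
      rw [sub_nonneg, div_le_div_iff₀ (by nlinarith) (by nlinarith)]
      nlinarith [pow_pos ht 3]
  have h0 : f 0 ≤ f x := hmono (by simp) hx hx
  have : f 0 = 0 := by simp [hf]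
  rw [this] at h0
  simpa [hf, sub_nonneg] using h0

noncomputable def Wa (j : ℕ) : ℝ := (Nat.factorial (2*j) : ℝ) / (4^j * (Nat.factorial j : ℝ)^2)

lemma Wa_pos (j : ℕ) : 0 < Wa j := by
  unfold Wa
  positivity

lemma Wa_succ (j : ℕ) : Wa (j+1) = Wa j * ((2*j+1)/(2*j+2)) := by
  unfold Wa
  have h1 : 2*(j+1) = (2*j+1)+1 := by ring
  rw [h1, Nat.factorial_succ, Nat.factorial_succ, Nat.factorial_succ]
  push_cast
  have hj : (Nat.factorial j : ℝ) ≠ 0 := Nat.cast_ne_zero.mpr (Nat.factorial_ne_zero j)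
  have h2 : ((2:ℝ)*j+2) ≠ 0 := by positivity
  field_simp
  ring

lemma Gamma_Wa (j : ℕ) : Real.Gamma ((j:ℝ) + 1/2) = Wa j * Real.sqrt Real.pi * (Nat.factorial j : ℝ) := by
  induction j with
  | zero =>
    norm_num [Wa]
    exact Real.Gamma_one_half_eq
  | succ j ih =>
    have h0 : ((j:ℝ)+1) + 1/2 = ((j:ℝ)+1/2) + 1 := by ring
    have hne : (j:ℝ) + 1/2 ≠ 0 := by positivity
    rw [Nat.cast_succ, h0, Real.Gamma_add_one hne, ih, Wa_succ, Nat.factorial_succ]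
    have h2 : ((2:ℝ)*j+2) ≠ 0 := by positivity
    push_cast
    field_simp

lemma Wa_sq_W (n : ℕ) : (Wa n)^2 * (2*(n:ℝ)+1) = (Real.Wallis.W n)⁻¹ := by
  rw [Real.Wallis.W_eq_factorial_ratio]
  unfold Wa
  have h1 : (Nat.factorial n : ℝ) ≠ 0 := Nat.cast_ne_zero.mpr (Nat.factorial_ne_zero n)
  have h2 : (Nat.factorial (2*n) : ℝ) ≠ 0 := Nat.cast_ne_zero.mpr (Nat.factorial_ne_zero _)
  have h3 : ((2:ℝ)*n+1) ≠ 0 := by positivity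
  have h4 : ((2:ℝ))^(4*n) = ((4:ℝ)^n)^2 := by
    rw [← pow_mul, show (4:ℝ) = 2^2 by norm_num, ← pow_mul]
    ring_nf
  rw [inv_div, h4]
  field_simp

lemma tendsto_u : Tendsto (fun n => (Wa n)^2 * (2*(n:ℝ)+1)) atTop (𝓝 (2/Real.pi)) := by
  have h := Real.Wallis.tendsto_W_nhds_pi_div_two.inv₀ (by positivity : Real.pi/2 ≠ 0)
  simp only [Wa_sq_W]
  convert h using 2
  rw [inv_div]

-- helpers
lemma tendsto_inv_lin (a b : ℝ) (ha : 0 < a) :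
    Tendsto (fun j : ℕ => (a*(j:ℝ)+b)⁻¹) atTop (𝓝 0) := by
  apply Tendsto.inv_tendsto_atTop
  exact (tendsto_natCast_atTop_atTop.const_mul_atTop ha).atTop_add tendsto_const_nhds

lemma tendsto_s : Tendsto (fun j : ℕ => (Wa j)^2 * ((j:ℝ)+1/4)) atTop (𝓝 (1/Real.pi)) := by
  have key : ∀ j : ℕ, (Wa j)^2 * ((j:ℝ)+1/4)
      = ((Wa j)^2 * (2*(j:ℝ)+1)) * (1/2 - (1/4) * (2*(j:ℝ)+1)⁻¹) := by
    intro j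
    have h : (2*(j:ℝ)+1) ≠ 0 := by positivity
    field_simp
    ring
  simp only [key]
  have h2 : (1:ℝ)/Real.pi = (2/Real.pi) * (1/2 - (1/4) * 0) := by
    norm_num
  rw [h2]
  exact tendsto_u.mul ((tendsto_const_nhds.sub (tendsto_const_nhds.mul (tendsto_inv_lin 2 1 (by norm_num)))))

lemma tendsto_v : Tendsto (fun j : ℕ => (Wa j)^2 * ((j:ℝ)+1/4+1/(32*(j:ℝ)+8))) atTop (𝓝 (1/Real.pi)) := by
  have key : ∀ j : ℕ, (Wa j)^2 * ((j:ℝ)+1/4+1/(32*(j:ℝ)+8))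
      = ((Wa j)^2 * (2*(j:ℝ)+1)) * (1/2 - (1/4) * (2*(j:ℝ)+1)⁻¹ + (32*(j:ℝ)+8)⁻¹ * (2*(j:ℝ)+1)⁻¹) := by
    intro j
    have h : (2*(j:ℝ)+1) ≠ 0 := by positivity
    have h8 : (32*(j:ℝ)+8) ≠ 0 := by positivity
    field_simp
    ring
  simp only [key]
  have h2 : (1:ℝ)/Real.pi = (2/Real.pi) * (1/2 - (1/4) * 0 + 0 * 0) := by norm_num
  rw [h2]
  exact tendsto_u.mul (((tendsto_const_nhds.sub (tendsto_const_nhds.mul (tendsto_inv_lin 2 1 (by norm_num))))).add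
    ((tendsto_inv_lin 32 8 (by norm_num)).mul (tendsto_inv_lin 2 1 (by norm_num))))

lemma s_diff (j : ℕ) : (Wa (j+1))^2 * (((j:ℝ)+1)+1/4)
    = (Wa j)^2 * ((j:ℝ)+1/4) + (Wa j)^2 * (1/(4*(2*(j:ℝ)+2)^2)) := by
  rw [Wa_succ]
  have h : (2*(j:ℝ)+2) ≠ 0 := by positivity
  push_cast
  field_simp
  ring

lemma v_diff (j : ℕ) : (Wa (j+1))^2 * (((j:ℝ)+1)+1/4+1/(32*((j:ℝ)+1)+8))
    + (Wa j)^2 * (72/((2*(j:ℝ)+2)^2*((32*(j:ℝ)+8)*(32*(j:ℝ)+40))))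
    = (Wa j)^2 * ((j:ℝ)+1/4+1/(32*(j:ℝ)+8)) := by
  rw [Wa_succ]
  have h : (2*(j:ℝ)+2) ≠ 0 := by positivity
  have h8 : (32*(j:ℝ)+8) ≠ 0 := by positivity
  have h40 : (32*((j:ℝ)+1)+8) ≠ 0 := by positivity
  have h40' : (32*(j:ℝ)+40) ≠ 0 := by positivity
  push_cast
  field_simp
  ring

lemma s_lt (j : ℕ) : (Wa j)^2 * ((j:ℝ)+1/4) < 1/Real.pi := by
  have smono : Monotone (fun j : ℕ => (Wa j)^2 * ((j:ℝ)+1/4)) := by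
    apply monotone_nat_of_le_succ
    intro n
    have := s_diff n
    have hpos : (0:ℝ) ≤ Wa n ^2 * (1/(4*(2*(n:ℝ)+2)^2)) := by positivity
    push_cast at this ⊢
    linarith
  have h1 : (Wa j)^2 * ((j:ℝ)+1/4) < (Wa (j+1))^2 * (((j:ℝ)+1)+1/4) := by
    rw [s_diff j]
    have hw := Wa_pos j
    have hpos : (0:ℝ) < Wa j ^2 * (1/(4*(2*(j:ℝ)+2)^2)) := by positivity
    linarith
  have h3 := smono.ge_of_tendsto tendsto_s (j+1)
  push_cast at h3
  linarith

lemma v_ge (j : ℕ) : 1/Real.pi ≤ (Wa j)^2 * ((j:ℝ)+1/4+1/(32*(j:ℝ)+8)) := by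
  have vanti : Antitone (fun j : ℕ => (Wa j)^2 * ((j:ℝ)+1/4+1/(32*(j:ℝ)+8))) := by
    apply antitone_nat_of_succ_le
    intro n
    have := v_diff n
    have hp : (0:ℝ) < (Wa n)^2 * (72/((2*(n:ℝ)+2)^2*((32*(n:ℝ)+8)*(32*(n:ℝ)+40)))) := by
      have := Wa_pos n
      positivity
    push_cast at this ⊢
    linarith
  exact vanti.le_of_tendsto tendsto_v j

lemma key_log1 {K : ℝ} (hK : 1 ≤ K) :
    K * Real.log (1 + 1/K) + Real.log (1 + 1/(2*K+1)) ≤ 1 := by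
  have hK0 : 0 < K := by linarith
  have hm : (0:ℝ) < 2*K+1 := by linarith
  have h1 := pade (by positivity : (0:ℝ) ≤ 1/K)
  have h2 := pade (by positivity : (0:ℝ) ≤ 1/(2*K+1))
  have e1 : (1/K) * (1/K + 6) / (2 * (2 * (1/K) + 3)) = (6*K+1)/(K*(6*K+4)) := by
    field_simp
    ring
  have e2 : (1/(2*K+1)) * (1/(2*K+1) + 6) / (2 * (2 * (1/(2*K+1)) + 3))
      = (12*K+7)/((2*K+1)*(12*K+10)) := by
    field_simp
    ring
  rw [e1] at h1
  rw [e2] at h2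
  have h3 : K * Real.log (1 + 1/K) ≤ (6*K+1)/(6*K+4) := by
    have := mul_le_mul_of_nonneg_left h1 hK0.le
    calc K * Real.log (1 + 1/K) ≤ K * ((6*K+1)/(K*(6*K+4))) := this
      _ = (6*K+1)/(6*K+4) := by field_simp
  have h4 : (6*K+1)/(6*K+4) + (12*K+7)/((2*K+1)*(12*K+10)) ≤ 1 := by
    rw [div_add_div _ _ (by positivity) (by positivity), div_le_one (by positivity)]
    nlinarith
  linarith

lemma key_log2 {K : ℝ} (hK : 1 ≤ K) :
    K * Real.log (1 + 1/K) + Real.log (1 + (4*K+7)/(8*K^2+20*K+12)) < 1 := by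
  have hK0 : 0 < K := by linarith
  have hB : (0:ℝ) < 8*K^2+20*K+12 := by nlinarith
  have hA : (0:ℝ) < 4*K+7 := by linarith
  have h1 := pade (by positivity : (0:ℝ) ≤ 1/K)
  have h2 := pade (by positivity : (0:ℝ) ≤ (4*K+7)/(8*K^2+20*K+12))
  have e1 : (1/K) * (1/K + 6) / (2 * (2 * (1/K) + 3)) = (6*K+1)/(K*(6*K+4)) := by
    field_simp
    ring
  rw [e1] at h1
  have h3 : K * Real.log (1 + 1/K) ≤ (6*K+1)/(6*K+4) := by
    have := mul_le_mul_of_nonneg_left h1 hK0.le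
    calc K * Real.log (1 + 1/K) ≤ K * ((6*K+1)/(K*(6*K+4))) := this
      _ = (6*K+1)/(6*K+4) := by field_simp
  set A := 4*K+7 with hAdef
  set B := 8*K^2+20*K+12 with hBdef
  have h23 : (0:ℝ) < 2*A+3*B := by nlinarith
  have e2 : (A/B) * (A/B + 6) / (2 * (2 * (A/B) + 3)) = A*(A+6*B)/(2*B*(2*A+3*B)) := by
    field_simp
  rw [e2] at h2
  have h4 : (6*K+1)/(6*K+4) + A*(A+6*B)/(2*B*(2*A+3*B)) < 1 := by
    rw [div_add_div _ _ (by positivity) (by positivity), div_lt_one (by positivity)]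
    rw [hAdef, hBdef]
    nlinarith [pow_pos hK0 3, sq_nonneg K, hK0]
  linarith

lemma key1 (K : ℕ) (hK : 1 ≤ K) :
    (1 + 1/(K:ℝ))^K ≤ Real.exp 1 * ((2*(K:ℝ)+1)/(2*(K:ℝ)+2)) := by
  have hK0 : (0:ℝ) < K := by exact_mod_cast hK
  have hb : (0:ℝ) < 1 + 1/(K:ℝ) := by positivity
  have hm : (0:ℝ) < 2*(K:ℝ)+1 := by positivity
  have hm2 : (0:ℝ) < 2*(K:ℝ)+2 := by positivity
  rw [← Real.exp_log (pow_pos hb K), Real.log_pow,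
    ← Real.exp_log (div_pos hm hm2), ← Real.exp_add, Real.exp_le_exp]
  have e3 : Real.log ((2*(K:ℝ)+1)/(2*(K:ℝ)+2)) = - Real.log (1 + 1/(2*(K:ℝ)+1)) := by
    rw [show (1:ℝ) + 1/(2*(K:ℝ)+1) = (2*(K:ℝ)+2)/(2*(K:ℝ)+1) by field_simp; ring,
      Real.log_div hm2.ne' hm.ne', Real.log_div hm.ne' hm2.ne']
    ring
  rw [e3]
  have := key_log1 (K := (K:ℝ)) (by exact_mod_cast hK)
  linarith

lemma key2 (K : ℕ) (hK : 1 ≤ K) :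
    (1 + 1/(K:ℝ))^K < Real.exp 1 * (((K:ℝ)+1)/((K:ℝ)+3/2+1/(8*(K:ℝ)+12))) := by
  have hK0 : (0:ℝ) < K := by exact_mod_cast hK
  have hb : (0:ℝ) < 1 + 1/(K:ℝ) := by positivity
  have h8 : (0:ℝ) < 8*(K:ℝ)+12 := by positivity
  have hden : (0:ℝ) < (K:ℝ)+3/2+1/(8*(K:ℝ)+12) := by positivity
  have hnum : (0:ℝ) < (K:ℝ)+1 := by positivity
  rw [← Real.exp_log (pow_pos hb K), Real.log_pow,
    ← Real.exp_log (div_pos hnum hden), ← Real.exp_add, Real.exp_lt_exp]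
  have e3 : Real.log (((K:ℝ)+1)/((K:ℝ)+3/2+1/(8*(K:ℝ)+12)))
      = - Real.log (1 + (4*(K:ℝ)+7)/(8*(K:ℝ)^2+20*(K:ℝ)+12)) := by
    have hB : (0:ℝ) < 8*(K:ℝ)^2+20*(K:ℝ)+12 := by positivity
    rw [show (1:ℝ) + (4*(K:ℝ)+7)/(8*(K:ℝ)^2+20*(K:ℝ)+12)
        = ((K:ℝ)+3/2+1/(8*(K:ℝ)+12))/((K:ℝ)+1) by field_simp; ring,
      Real.log_div hden.ne' hnum.ne', Real.log_div hnum.ne' hden.ne']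
    ring
  rw [e3]
  have := key_log2 (K := (K:ℝ)) (by exact_mod_cast hK)
  linarith

section main
variable (d : ℕ → ℝ)
  (hd : ∀ k : ℕ, d k = ((k : ℝ) / (2 * Real.exp 1)) ^ ((k : ℝ) / 2) *
      (2 * Real.sqrt Real.pi / Real.Gamma (((k : ℝ) + 1) / 2)))

include hd

lemma d_even (j : ℕ) : d (2*j) = ((j:ℝ)/Real.exp 1)^j * (2/(Wa j * (Nat.factorial j : ℝ))) := by
  have hE : (0:ℝ) < Real.exp 1 := Real.exp_pos 1
  have hS : (0:ℝ) < Real.sqrt Real.pi := Real.sqrt_pos.mpr Real.pi_pos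
  have hW := Wa_pos j
  have hF : (0:ℝ) < (Nat.factorial j : ℝ) := by exact_mod_cast (Nat.factorial_pos j)
  rw [hd (2*j)]
  have c1 : ((2*j:ℕ):ℝ) = 2*(j:ℝ) := by push_cast; ring
  rw [c1]
  have c2 : (2*(j:ℝ)+1)/2 = (j:ℝ)+1/2 := by ring
  rw [c2, Gamma_Wa]
  have c3 : 2*(j:ℝ)/(2*Real.exp 1) = (j:ℝ)/Real.exp 1 := by
    rw [mul_div_mul_left _ _ (two_ne_zero)]
  have c4 : 2*(j:ℝ)/2 = ((j:ℕ):ℝ) := by push_cast; ring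
  rw [c3, c4, Real.rpow_natCast]
  congr 1
  rw [div_eq_div_iff (by positivity) (by positivity)]
  ring

lemma d_odd (j : ℕ) : d (2*j+1)
    = ((2*(j:ℝ)+1)/(2*Real.exp 1)) ^ ((2*(j:ℝ)+1)/2) * (2*Real.sqrt Real.pi/(Nat.factorial j : ℝ)) := by
  rw [hd (2*j+1)]
  have c1 : ((2*j+1:ℕ):ℝ) = 2*(j:ℝ)+1 := by push_cast; ring
  rw [c1]
  have c2 : (2*(j:ℝ)+1+1)/2 = (j:ℝ)+1 := by ring
  rw [c2, Real.Gamma_nat_eq_factorial]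

lemma step_even (j : ℕ) (hj : 1 ≤ j) : d (2*j+1) < d (2*j) := by
  have hS : (0:ℝ) < Real.sqrt Real.pi := Real.sqrt_pos.mpr Real.pi_pos
  have hW := Wa_pos j
  have hF : (0:ℝ) < (Nat.factorial j : ℝ) := by exact_mod_cast (Nat.factorial_pos j)
  have hj0 : (0:ℝ) < (j:ℝ) := by exact_mod_cast hj
  set E := Real.exp 1 with hEdef
  have hE : (0:ℝ) < E := Real.exp_pos 1
  set A : ℝ := (2*(j:ℝ)+1)/(2*E) with hAdef
  set B : ℝ := (j:ℝ)/E with hBdef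
  have hA : 0 < A := by positivity
  have hB : 0 < B := by positivity
  rw [d_even d hd, d_odd d hd]
  have hd2 : (0:ℝ) ≤ B^j * (2/(Wa j * (Nat.factorial j : ℝ))) := by positivity
  apply lt_of_pow_lt_pow_left₀ 2 hd2
  have sqA : (A ^ ((2*(j:ℝ)+1)/2))^2 = A^(2*j+1) := by
    rw [← Real.rpow_natCast (A ^ ((2*(j:ℝ)+1)/2)) 2, ← Real.rpow_mul hA.le]
    rw [show (2*(j:ℝ)+1)/2 * ((2:ℕ):ℝ) = ((2*j+1:ℕ):ℝ) by push_cast; ring]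
    rw [Real.rpow_natCast]
  have sq1 : (A ^ ((2*(j:ℝ)+1)/2) * (2*Real.sqrt Real.pi/(Nat.factorial j : ℝ)))^2
      = A^(2*j+1) * (4*Real.pi/((Nat.factorial j : ℝ))^2) := by
    rw [mul_pow, sqA]
    congr 1
    rw [div_pow, mul_pow, Real.sq_sqrt Real.pi_pos.le]
    norm_num
  have sq2 : (B^j * (2/(Wa j * (Nat.factorial j : ℝ))))^2
      = B^(2*j) * (4/((Wa j)^2*((Nat.factorial j : ℝ))^2)) := by
    rw [mul_pow, ← pow_mul, mul_comm j 2]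
    congr 1
    rw [div_pow, mul_pow]
    norm_num
  rw [sq1, sq2]
  -- key inequality T
  have hbase : (1 + 1/((2*j:ℕ):ℝ)) * B = A := by
    rw [hBdef, hAdef]
    push_cast
    field_simp
  have hk1 := key1 (2*j) (by omega)
  have T : A^(2*j+1) ≤ B^(2*j) * ((j:ℝ)+1/4) := by
    calc A^(2*j+1) = ((1 + 1/((2*j:ℕ):ℝ)) * B)^(2*j) * A := by rw [hbase, pow_succ]
      _ = (1 + 1/((2*j:ℕ):ℝ))^(2*j) * B^(2*j) * A := by rw [mul_pow]
      _ ≤ (E * ((2*((2*j:ℕ):ℝ)+1)/(2*((2*j:ℕ):ℝ)+2))) * (B^(2*j) * A) := by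
          rw [mul_assoc]
          exact mul_le_mul_of_nonneg_right hk1 (by positivity)
      _ = B^(2*j) * ((j:ℝ)+1/4) := by
          rw [hAdef]
          push_cast
          have h1 : (2*(2*(j:ℝ))+2) ≠ 0 := by positivity
          field_simp
          ring
  -- Wallis bound
  have hWs : Real.pi * (Wa j)^2 * ((j:ℝ)+1/4) < 1 := by
    have := s_lt j
    have hpi := Real.pi_pos
    rw [lt_div_iff₀ hpi] at this
    nlinarith [this]
  -- combine
  have core : A^(2*j+1) * (Real.pi * (Wa j)^2) < B^(2*j) := by
    calc A^(2*j+1) * (Real.pi * (Wa j)^2)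
        ≤ (B^(2*j) * ((j:ℝ)+1/4)) * (Real.pi * (Wa j)^2) := by
          exact mul_le_mul_of_nonneg_right T (by positivity)
      _ = B^(2*j) * (Real.pi * (Wa j)^2 * ((j:ℝ)+1/4)) := by ring
      _ < B^(2*j) * 1 := by
          exact mul_lt_mul_of_pos_left hWs (by positivity)
      _ = B^(2*j) := mul_one _
  calc A^(2*j+1) * (4*Real.pi/((Nat.factorial j : ℝ))^2)
      = (A^(2*j+1) * (Real.pi * (Wa j)^2)) * (4/((Wa j)^2*((Nat.factorial j : ℝ))^2)) := by
        field_simp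
    _ < B^(2*j) * (4/((Wa j)^2*((Nat.factorial j : ℝ))^2)) := by
        exact mul_lt_mul_of_pos_right core (by positivity)

lemma step_odd (j : ℕ) : d (2*j+2) < d (2*j+1) := by
  have hS : (0:ℝ) < Real.sqrt Real.pi := Real.sqrt_pos.mpr Real.pi_pos
  have hW := Wa_pos (j+1)
  have hF : (0:ℝ) < (Nat.factorial j : ℝ) := by exact_mod_cast (Nat.factorial_pos j)
  set E := Real.exp 1 with hEdef
  have hE : (0:ℝ) < E := Real.exp_pos 1
  set A : ℝ := (2*(j:ℝ)+1)/(2*E) with hAdef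
  have hA : 0 < A := by positivity
  set B' : ℝ := (((j+1:ℕ)):ℝ)/E with hBdef
  have hB : 0 < B' := by positivity
  have h2j2 : 2*j+2 = 2*(j+1) := by ring
  rw [h2j2, d_even d hd, d_odd d hd]
  rw [← hBdef]
  have hd1 : (0:ℝ) ≤ A ^ ((2*(j:ℝ)+1)/2) * (2*Real.sqrt Real.pi/(Nat.factorial j : ℝ)) := by
    have := Real.rpow_pos_of_pos hA ((2*(j:ℝ)+1)/2)
    positivity
  apply lt_of_pow_lt_pow_left₀ 2 hd1
  have sqA : (A ^ ((2*(j:ℝ)+1)/2))^2 = A^(2*j+1) := by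
    rw [← Real.rpow_natCast (A ^ ((2*(j:ℝ)+1)/2)) 2, ← Real.rpow_mul hA.le]
    rw [show (2*(j:ℝ)+1)/2 * ((2:ℕ):ℝ) = ((2*j+1:ℕ):ℝ) by push_cast; ring]
    rw [Real.rpow_natCast]
  have sq1 : (A ^ ((2*(j:ℝ)+1)/2) * (2*Real.sqrt Real.pi/(Nat.factorial j : ℝ)))^2
      = A^(2*j+1) * (4*Real.pi/((Nat.factorial j : ℝ))^2) := by
    rw [mul_pow, sqA]
    congr 1
    rw [div_pow, mul_pow, Real.sq_sqrt Real.pi_pos.le]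
    norm_num
  have hFs : ((Nat.factorial (j+1) : ℝ)) = ((j:ℝ)+1) * (Nat.factorial j : ℝ) := by
    rw [Nat.factorial_succ]; push_cast; ring
  have sq2 : (B'^(j+1) * (2/(Wa (j+1) * (Nat.factorial (j+1) : ℝ))))^2
      = B'^(2*j+2) * (4/((Wa (j+1))^2*(((j:ℝ)+1)^2*((Nat.factorial j : ℝ))^2))) := by
    rw [mul_pow, ← pow_mul, hFs]
    rw [show (j+1)*2 = 2*j+2 by ring]
    congr 1
    rw [div_pow, mul_pow, mul_pow]
    norm_num
  rw [sq1, sq2]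
  -- T'
  set D : ℝ := (j:ℝ)+5/4+1/(32*(j:ℝ)+40) with hDdef
  have hDpos : 0 < D := by positivity
  have hbase : (1 + 1/((2*j+1:ℕ):ℝ)) * A = B' := by
    rw [hAdef, hBdef]
    push_cast
    have : (2*(j:ℝ)+1) ≠ 0 := by positivity
    field_simp
    ring
  have hk2 := key2 (2*j+1) (by omega)
  have hden : (0:ℝ) < ((2*j+1:ℕ):ℝ)+3/2+1/(8*((2*j+1:ℕ):ℝ)+12) := by positivity
  have T : B'^(2*j+2) * D < A^(2*j+1) * ((j:ℝ)+1)^2 := by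
    calc B'^(2*j+2) * D
        = (1 + 1/((2*j+1:ℕ):ℝ))^(2*j+1) * (A^(2*j+1) * (B' * D)) := by
          rw [← hbase, mul_pow]
          ring
      _ < (E * ((((2*j+1:ℕ):ℝ)+1)/(((2*j+1:ℕ):ℝ)+3/2+1/(8*((2*j+1:ℕ):ℝ)+12))))
            * (A^(2*j+1) * (B' * D)) := by
          apply mul_lt_mul_of_pos_right hk2
          have := pow_pos hA (2*j+1)
          positivity
      _ = A^(2*j+1) * ((j:ℝ)+1)^2 := by
          rw [hBdef, hDdef]
          push_cast
          have h1 : (8*(2*(j:ℝ)+1)+12) ≠ 0 := by positivity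
          have h2 : (32*(j:ℝ)+40) ≠ 0 := by positivity
          have h3 : (2*(j:ℝ)+1)+3/2+1/(8*(2*(j:ℝ)+1)+12) ≠ 0 := by positivity
          field_simp
          ring
  -- Wallis lower bound
  have hv : 1 ≤ Real.pi * (Wa (j+1))^2 * D := by
    have h := v_ge (j+1)
    have hpi := Real.pi_pos
    rw [div_le_iff₀ hpi] at h
    have e1 : ((j+1:ℕ):ℝ)+1/4+1/(32*((j+1:ℕ):ℝ)+8) = D := by
      rw [hDdef]; push_cast; ring_nf
    rw [e1] at h
    nlinarith [h]
  have core : B'^(2*j+2) < A^(2*j+1) * (Real.pi * (Wa (j+1))^2) * ((j:ℝ)+1)^2 := by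
    calc B'^(2*j+2) = B'^(2*j+2) * 1 := (mul_one _).symm
      _ ≤ B'^(2*j+2) * (Real.pi * (Wa (j+1))^2 * D) := by
          exact mul_le_mul_of_nonneg_left hv (by positivity)
      _ = (B'^(2*j+2) * D) * (Real.pi * (Wa (j+1))^2) := by ring
      _ < (A^(2*j+1) * ((j:ℝ)+1)^2) * (Real.pi * (Wa (j+1))^2) := by
          exact mul_lt_mul_of_pos_right T (by positivity)
      _ = A^(2*j+1) * (Real.pi * (Wa (j+1))^2) * ((j:ℝ)+1)^2 := by ring
  have hj1 : ((j:ℝ)+1) ≠ 0 := by positivity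
  calc B'^(2*j+2) * (4/((Wa (j+1))^2*(((j:ℝ)+1)^2*((Nat.factorial j : ℝ))^2)))
      < (A^(2*j+1) * (Real.pi * (Wa (j+1))^2) * ((j:ℝ)+1)^2)
          * (4/((Wa (j+1))^2*(((j:ℝ)+1)^2*((Nat.factorial j : ℝ))^2))) := by
        exact mul_lt_mul_of_pos_right core (by positivity)
    _ = A^(2*j+1) * (4*Real.pi/((Nat.factorial j : ℝ))^2) := by
        field_simp


end main

lemma d_step (d : ℕ → ℝ)
    (hd : ∀ k : ℕ, d k = ((k : ℝ) / (2 * Real.exp 1)) ^ ((k : ℝ) / 2) *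
      (2 * Real.sqrt Real.pi / Real.Gamma (((k : ℝ) + 1) / 2)))
    (k : ℕ) (hk : 1 ≤ k) : d (k+1) < d k := by
  rcases Nat.even_or_odd k with ⟨j, hj⟩ | ⟨j, hj⟩
  · have h1 : k = 2*j := by omega
    rw [show k + 1 = 2*j+1 by omega, h1]
    exact step_even d hd j (by omega)
  · have h1 : k = 2*j+1 := by omega
    rw [show k + 1 = 2*j+2 by omega, h1]
    exact step_odd d hd j

lemma d_anti (d : ℕ → ℝ)
    (hd : ∀ k : ℕ, d k = ((k : ℝ) / (2 * Real.exp 1)) ^ ((k : ℝ) / 2) *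
      (2 * Real.sqrt Real.pi / Real.Gamma (((k : ℝ) + 1) / 2)))
    (k m : ℕ) (hk : 1 ≤ k) (h : k < m) : d m < d k := by
  induction m, h using Nat.le_induction with
  | base => exact d_step d hd k hk
  | succ n hn ih => exact lt_trans (d_step d hd n (by omega)) ih

/-- The Gaussian density determines the sphere dimension of a shrinking cylinder:
with `d_k = (k/(2e))^{k/2} · 2√π / Γ((k+1)/2)`, if `d k ≤ d m` then `k ≥ m`;
in particular `d k = d m` implies `k = m`. -/
theorem gaussian_density_determines_dimension (d : ℕ → ℝ)
    (hd : ∀ k : ℕ, d k = ((k : ℝ) / (2 * Real.exp 1)) ^ ((k : ℝ) / 2) *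
      (2 * Real.sqrt Real.pi / Real.Gamma (((k : ℝ) + 1) / 2)))
    (k m : ℕ) (hk : 1 ≤ k) (hm : 1 ≤ m) :
    (d k ≤ d m → m ≤ k) ∧ (d k = d m → k = m) := by
  constructor
  · intro h
    by_contra hc
    push_neg at hc
    exact absurd h (not_le.mpr (d_anti d hd k m hk hc))
  · intro h
    rcases lt_trichotomy k m with hlt | heq | hgt
    · exact absurd h (ne_of_gt (d_anti d hd k m hk hlt))
    · exact heq
    · exact absurd h (ne_of_lt (d_anti d hd m k hm hgt))
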